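/- Let p be a prime, f : (ℤ/pℤ)^n → {−1,+1}, and r ∈ (ℤ/pℤ)^n with f̂(χ_r) ≠ 0. Then f̂(χ_{i·r}) ≠ 0 for every i ∈ {1, …, p−1}. Consequently the Fourier support of f is closed under multiplication of frequencies by nonzero scalars of ℤ/pℤ. -/

import Mathlib

open Matrix Polynomial

noncomputable def omega (p : ℕ) : ℂ := Complex.exp (2 * Real.pi * Complex.I / p)

noncomputable def chi (p : ℕ) {n : ℕ} (r x : Fin n → ZMod p) : ℂ :=
  omega p ^ (r ⬝ᵥ x).val

noncomputable def fhat (p : ℕ) {n : ℕ} [NeZero p]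
    (f : (Fin n → ZMod p) → ℂ) (r : Fin n → ZMod p) : ℂ :=
  (1 / (p : ℂ) ^ n) * ∑ x, f x * (starRingEnd ℂ) (chi p r x)

lemma omega_pow_p (p : ℕ) [NeZero p] : omega p ^ p = 1 := by
  rw [omega, ← Complex.exp_nat_mul]
  rw [show (p:ℂ) * (2 * Real.pi * Complex.I / p) = 2 * Real.pi * Complex.I from
    mul_div_cancel₀ _ (Nat.cast_ne_zero.mpr (NeZero.ne p))]
  exact Complex.exp_two_pi_mul_I

lemma omega_abs (p : ℕ) : ‖omega p‖ = 1 := by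
  rw [omega, show (2 * Real.pi * Complex.I / p : ℂ) = ((2 * Real.pi / p : ℝ) : ℂ) * Complex.I by
    push_cast; ring, Complex.norm_exp_ofReal_mul_I]

lemma omega_pow_of_dvd (p : ℕ) [NeZero p] {a : ℕ} (h : p ∣ a) : omega p ^ a = 1 := by
  obtain ⟨k, rfl⟩ := h
  rw [pow_mul, omega_pow_p, one_pow]

lemma conj_chi (p : ℕ) [NeZero p] {n : ℕ} (i : ℕ) (r x : Fin n → ZMod p) :
    (starRingEnd ℂ) (chi p ((i : ZMod p) • r) x)
      = (omega p ^ i) ^ ((p - (r ⬝ᵥ x).val) % p) := by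
  show (starRingEnd ℂ) (omega p ^ (((i : ZMod p) • r) ⬝ᵥ x).val) = _
  have habs : ‖omega p ^ (((i : ZMod p) • r) ⬝ᵥ x).val‖ = 1 := by
    rw [norm_pow, omega_abs, one_pow]
  rw [← Complex.inv_eq_conj habs, ← pow_mul]
  apply inv_eq_of_mul_eq_one_right
  rw [← pow_add]
  apply omega_pow_of_dvd
  have : (((((i : ZMod p) • r) ⬝ᵥ x).val + i * ((p - (r ⬝ᵥ x).val) % p) : ℕ) : ZMod p) = 0 := by
    push_cast [ZMod.natCast_mod, ZMod.natCast_val, ZMod.cast_id]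
    rw [Nat.cast_sub (ZMod.val_lt (r ⬝ᵥ x)).le]
    push_cast [ZMod.natCast_val, ZMod.cast_id, smul_dotProduct, smul_eq_mul, ZMod.natCast_self]
    ring
  exact (ZMod.natCast_eq_zero_iff _ _).mp this

theorem fourier_support_closed_under_scalar_mul
    (p n : ℕ) [NeZero p] (hp : p.Prime)
    (f : (Fin n → ZMod p) → ℂ) (hf : ∀ x, f x = 1 ∨ f x = -1)
    (r : Fin n → ZMod p) (hr : fhat p f r ≠ 0) :
    ∀ i : ℕ, 1 ≤ i → i ≤ p - 1 → fhat p f ((i : ZMod p) • r) ≠ 0 := by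
  -- rational coefficients of f
  set c : (Fin n → ZMod p) → ℚ := fun x => if f x = 1 then 1 else -1 with hc
  have hcf : ∀ x, ((c x : ℚ) : ℂ) = f x := by
    intro x
    rcases hf x with h | h <;> simp only [hc, h] <;> norm_num
  -- the polynomial u
  set u : Polynomial ℚ := ∑ x, C (c x) * X ^ ((p - (r ⬝ᵥ x).val) % p) with hu
  have key : ∀ i : ℕ, fhat p f ((i : ZMod p) • r)
      = (1 / (p : ℂ) ^ n) * (aeval (omega p ^ i)) u := by
    intro i
    rw [fhat, hu]
    congr 1
    rw [map_sum]
    refine Finset.sum_congr rfl fun x _ => ?_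
    rw [conj_chi, _root_.map_mul, aeval_C, map_pow, aeval_X, ← hcf x]
    norm_num
  have hpn : (1 / (p : ℂ) ^ n) ≠ 0 := by
    exact one_div_ne_zero (pow_ne_zero _ (Nat.cast_ne_zero.mpr (NeZero.ne p)))
  have hprim : IsPrimitiveRoot (omega p) p := Complex.isPrimitiveRoot_exp p (NeZero.ne p)
  have hu1 : (aeval (omega p)) u ≠ 0 := by
    intro h
    apply hr
    have := key 1
    rw [Nat.cast_one, one_smul] at this
    rw [this, pow_one, h, mul_zero]
  intro i hi1 hi2
  have hip : i < p := lt_of_le_of_lt hi2 (Nat.sub_lt hp.pos one_pos)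
  have hcop : i.Coprime p := Nat.Coprime.symm
    (hp.coprime_iff_not_dvd.mpr (Nat.not_dvd_of_pos_of_lt hi1 hip))
  have hprimi : IsPrimitiveRoot (omega p ^ i) p := hprim.pow_of_coprime i hcop
  rw [key i]
  intro h
  have h0 : (aeval (omega p ^ i)) u = 0 := by
    rcases mul_eq_zero.mp h with h' | h'
    · exact absurd h' hpn
    · exact h'
  have hdvd : minpoly ℚ (omega p ^ i) ∣ u := minpoly.dvd ℚ _ h0
  have hmin : minpoly ℚ (omega p ^ i) = minpoly ℚ (omega p) := by
    rw [← Polynomial.cyclotomic_eq_minpoly_rat hprimi hp.pos,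
        Polynomial.cyclotomic_eq_minpoly_rat hprim hp.pos]
  rw [hmin] at hdvd
  obtain ⟨q, hq⟩ := hdvd
  apply hu1
  rw [hq, _root_.map_mul, minpoly.aeval, zero_mul]
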